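/- Let G be a finite group, p a prime, and P₀ < ⋯ < Pₙ a strictly increasing chain of nontrivial p-subgroups of G with each Pᵢ normal in Pₙ. If Pₙ is not a Sylow p-subgroup of N = ⋂ᵢ N_G(Pᵢ), then there exists a p-subgroup P of G with Pₙ < P, P a Sylow p-subgroup of N, and Pᵢ normal in P for all i. -/

import Mathlib

/-- `Q` is a Sylow `p`-subgroup of the subgroup `H`. -/
def IsSylowIn (p : ℕ) {G : Type*} [Group G] (Q H : Subgroup G) : Prop :=
  Q ≤ H ∧ Nat.card Q = p ^ (Nat.card H).factorization p

/-- If the top of a Robinson chain is not Sylow in the intersection `N` of the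
normalizers, then there is a Sylow p-subgroup `P` of `N` properly containing the
top, with every chain member normal in `P`. -/
theorem exists_sylow_extension
    {G : Type*} [Group G] [Finite G] {p : ℕ} [Fact p.Prime]
    (hp : p ∣ Nat.card G)
    {n : ℕ} (P : Fin (n + 1) → Subgroup G)
    (hmono : StrictMono P)
    (hbot : ∀ i, P i ≠ ⊥)
    (hpgrp : ∀ i, IsPGroup p (P i))
    (hnorm : ∀ i, P (Fin.last n) ≤ Subgroup.normalizer (P i : Set G))
    (hnotSyl : ¬ IsSylowIn p (P (Fin.last n)) (⨅ i, Subgroup.normalizer (P i : Set G))) :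
    ∃ Q : Subgroup G, IsPGroup p Q ∧ P (Fin.last n) < Q ∧
      IsSylowIn p Q (⨅ i, Subgroup.normalizer (P i : Set G)) ∧
      ∀ i, P i ≤ Q ∧ Q ≤ Subgroup.normalizer (P i : Set G) := by
  set N : Subgroup G := ⨅ i, Subgroup.normalizer (P i : Set G) with hN
  have hPnN : P (Fin.last n) ≤ N := le_iInf hnorm
  have hpg : IsPGroup p ((P (Fin.last n)).subgroupOf N) :=
    (hpgrp (Fin.last n)).of_equiv (Subgroup.subgroupOfEquivOfLe hPnN).symm
  obtain ⟨S, hS⟩ := hpg.exists_le_sylow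
  set Q : Subgroup G := (S : Subgroup N).map N.subtype with hQ
  have hQN : Q ≤ N := Subgroup.map_subtype_le _
  have hPnQ : P (Fin.last n) ≤ Q := by
    have := Subgroup.map_mono (f := N.subtype) hS
    rwa [Subgroup.subgroupOf_map_subtype, inf_eq_left.mpr hPnN] at this
  have hcardQ : Nat.card Q = p ^ (Nat.card N).factorization p := by
    rw [hQ, ← S.card_eq_multiplicity]
    exact Nat.card_congr
      (Subgroup.equivMapOfInjective (S : Subgroup N) N.subtype N.subtype_injective).symm.toEquiv
  refine ⟨Q, S.isPGroup'.map N.subtype, lt_of_le_of_ne hPnQ ?_, ⟨hQN, hcardQ⟩, fun i => ?_⟩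
  · intro h
    exact hnotSyl ⟨hPnN, by rw [h, hcardQ]⟩
  · exact ⟨le_trans (hmono.monotone (Fin.le_last i)) hPnQ,
      le_trans hQN (iInf_le _ i)⟩
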